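/- arXiv:1012.4242 — 5 statements merged into one kernel-verified Lean document; each statement's English description precedes it below -/
import Mathlib

section
/- Let F be a homogeneous cubic polynomial in variables x_0,...,x_3 over the complex numbers, and let a = (a_0,...,a_3) with F(a) = 0. Then the determinant of the 4×4 bordered matrix whose (0,0)-entry is 0, whose first row and first column (apart from the corner) are (∂F/∂x_1(a), ∂F/∂x_2(a), ∂F/∂x_3(a)), and whose lower-right 3×3 block is (∂²F/∂x_i∂x_j(a))_{1≤i,j≤3}, equals (a_0²/4) times the determinant of the full 4×4 Hessian matrix (∂²F/∂x_i∂x_j(a))_{0≤i,j≤3}. -/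
open MvPolynomial
lemma my_det_fin_four (A : Matrix (Fin 4) (Fin 4) ℂ) :
    A.det = A 0 0*A 1 1*A 2 2*A 3 3 - A 0 0*A 1 1*A 2 3*A 3 2 - A 0 0*A 1 2*A 2 1*A 3 3 + A 0 0*A 1 2*A 2 3*A 3 1 + A 0 0*A 1 3*A 2 1*A 3 2 - A 0 0*A 1 3*A 2 2*A 3 1 - A 0 1*A 1 0*A 2 2*A 3 3 + A 0 1*A 1 0*A 2 3*A 3 2 + A 0 1*A 1 2*A 2 0*A 3 3 - A 0 1*A 1 2*A 2 3*A 3 0 - A 0 1*A 1 3*A 2 0*A 3 2 + A 0 1*A 1 3*A 2 2*A 3 0 + A 0 2*A 1 0*A 2 1*A 3 3 - A 0 2*A 1 0*A 2 3*A 3 1 - A 0 2*A 1 1*A 2 0*A 3 3 + A 0 2*A 1 1*A 2 3*A 3 0 + A 0 2*A 1 3*A 2 0*A 3 1 - A 0 2*A 1 3*A 2 1*A 3 0 - A 0 3*A 1 0*A 2 1*A 3 2 + A 0 3*A 1 0*A 2 2*A 3 1 + A 0 3*A 1 1*A 2 0*A 3 2 - A 0 3*A 1 1*A 2 2*A 3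 0 - A 0 3*A 1 2*A 2 0*A 3 1 + A 0 3*A 1 2*A 2 1*A 3 0
 := by
  have e1 : (Fin.succ 2 : Fin 4) = 3 := by decide
  have e2 : Fin.succAbove (1 : Fin 4) (2 : Fin 3) = 3 := by decide
  have e3 : Fin.succAbove (2 : Fin 4) (2 : Fin 3) = 3 := by decide
  have e4 : (Fin.castSucc (2 : Fin 3) : Fin 4) = 2 := by decide
  have e5 : Fin.succAbove (3 : Fin 4) (2 : Fin 3) = 2 := by decide
  simp [Matrix.det_succ_row_zero, Fin.sum_univ_succ, e1, e2, e3, e4, e5]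
  ring
lemma my_pderiv_comm {σ : Type*} [DecidableEq σ] (i j : σ) (p : MvPolynomial σ ℂ) :
    pderiv i (pderiv j p) = pderiv j (pderiv i p) := by
  induction p using MvPolynomial.induction_on with
  | C c => simp
  | add p q hp hq => simp [hp, hq]
  | mul_X p k hp =>
      simp [pderiv_mul, hp, Pi.single_apply, apply_ite (pderiv i), apply_ite (pderiv j)]
      ring

lemma my_fin_degree (s : Fin 4 →₀ ℕ) : s.degree = ∑ i, s i :=
  Finset.sum_subset (Finset.subset_univ _)
    (fun x _ hx => Finsupp.notMem_support_iff.mp hx)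

lemma my_pderiv_homog {F : MvPolynomial (Fin 4) ℂ} {n : ℕ} (hF : F.IsHomogeneous (n+1))
    (i : Fin 4) : (pderiv i F).IsHomogeneous n := by
  rw [F.as_sum, map_sum]
  apply MvPolynomial.IsHomogeneous.sum
  intro s hs
  rw [pderiv_monomial]
  rcases Nat.eq_zero_or_pos (s i) with h0 | hpos
  · rw [h0]; simp only [Nat.cast_zero, mul_zero, map_zero]
    exact isHomogeneous_zero _ _ _
  · apply isHomogeneous_monomial
    have hdeg : s.degree = n + 1 := by
      rw [Finsupp.degree_eq_weight_one]; exact hF (mem_support_iff.mp hs)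
    rw [my_fin_degree] at hdeg
    rw [my_fin_degree]
    have h1 : ∀ j, ((s - Finsupp.single i 1 : Fin 4 →₀ ℕ) j) = s j - (if j = i then 1 else 0) := by
      intro j; simp [Finsupp.sub_apply, Finsupp.single_apply, eq_comm]
    calc ∑ j, ((s - Finsupp.single i 1 : Fin 4 →₀ ℕ) j)
        = ∑ j, (s j - if j = i then 1 else 0) := by simp_rw [h1]
      _ = n := by
          rw [Fin.sum_univ_four] at hdeg ⊢
          fin_cases i <;> simp_all <;> omega

lemma my_euler {n : ℕ} {F : MvPolynomial (Fin 4) ℂ} (hF : F.IsHomogeneous n) (a : Fin 4 → ℂ) :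
    ∑ i, a i * eval a (pderiv i F) = n * eval a F := by
  rw [F.as_sum]
  simp only [map_sum, Finset.mul_sum]
  rw [Finset.sum_comm]
  apply Finset.sum_congr rfl
  intro s hs
  have hdeg : (∑ i, s i) = n := by
    rw [← my_fin_degree, Finsupp.degree_eq_weight_one]; exact hF (mem_support_iff.mp hs)
  set c := coeff s F with hc
  have heval : ∀ t : Fin 4 →₀ ℕ, ∀ r : ℂ,
      eval a (monomial t r) = r * ∏ j, a j ^ t j := by
    intro t r
    rw [eval_monomial, Finsupp.prod_fintype]
    intro j; exact pow_zero _
  have key : ∀ i : Fin 4, a i * eval a (pderiv i (monomial s c))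
      = (s i : ℂ) * (c * ∏ j, a j ^ s j) := by
    intro i
    rw [pderiv_monomial, heval]
    rcases Nat.eq_zero_or_pos (s i) with h0 | hpos
    · simp [h0]
    · obtain ⟨m, hm⟩ : ∃ m, s i = m + 1 := ⟨s i - 1, by omega⟩
      have hsub : ∀ j, ((s - Finsupp.single i 1 : Fin 4 →₀ ℕ) j) = if j = i then m else s j := by
        intro j
        rcases eq_or_ne j i with rfl | hj
        · simp [Finsupp.sub_apply, hm]
        · simp [Finsupp.sub_apply, Finsupp.single_apply, hj, Ne.symm hj]
      have hprod : a i * ∏ j, a j ^ (((s - Finsupp.single i 1 : Fin 4 →₀ ℕ) j)) = ∏ j, a j ^ s j := by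
        rw [← Finset.mul_prod_erase Finset.univ (fun j => a j ^ (((s - Finsupp.single i 1 : Fin 4 →₀ ℕ) j)))
              (Finset.mem_univ i),
            ← Finset.mul_prod_erase Finset.univ (fun j => a j ^ s j) (Finset.mem_univ i),
            ← mul_assoc]
        congr 1
        · rw [hsub i, if_pos rfl, hm, pow_succ']
        · apply Finset.prod_congr rfl
          intro j hj
          rw [hsub j, if_neg (Finset.mem_erase.mp hj).1]
      calc a i * (c * (s i : ℂ) * ∏ j, a j ^ (((s - Finsupp.single i 1 : Fin 4 →₀ ℕ) j)))
          = (s i : ℂ) * (c * (a i * ∏ j, a j ^ (((s - Finsupp.single i 1 : Fin 4 →₀ ℕ) j)))) := by ring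
        _ = (s i : ℂ) * (c * ∏ j, a j ^ s j) := by rw [hprod]
  simp_rw [key, heval]
  rw [← Finset.sum_mul, ← Nat.cast_sum, hdeg]

set_option maxHeartbeats 2000000 in
/-- bordered Hessian identity for a cubic form at a point of the surface. -/
theorem bordered_hessian_det (F : MvPolynomial (Fin 4) ℂ)
    (hF : F.IsHomogeneous 3) (a : Fin 4 → ℂ) (ha : eval a F = 0) :
    (Matrix.of fun i j : Fin 4 =>
      if i = 0 ∧ j = 0 then 0
      else if i = 0 then eval a (pderiv j F)
      else if j = 0 then eval a (pderiv i F)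
      else eval a (pderiv i (pderiv j F))).det
    = (a 0) ^ 2 / 4 *
      (Matrix.of fun i j : Fin 4 => eval a (pderiv i (pderiv j F))).det := by
  have hsym : ∀ i j : Fin 4,
      eval a (pderiv i (pderiv j F)) = eval a (pderiv j (pderiv i F)) := by
    intro i j; rw [my_pderiv_comm]
  have hd4 : ∀ j : Fin 4,
      a 0 * eval a (pderiv 0 (pderiv j F)) + a 1 * eval a (pderiv 1 (pderiv j F)) +
      a 2 * eval a (pderiv 2 (pderiv j F)) + a 3 * eval a (pderiv 3 (pderiv j F))
      = 2 * eval a (pderiv j F) := by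
    intro j
    have h := my_euler (my_pderiv_homog (n := 2) hF j) a
    rw [Fin.sum_univ_four] at h
    simpa using h
  have he : a 0 * eval a (pderiv 0 F) + a 1 * eval a (pderiv 1 F) +
      a 2 * eval a (pderiv 2 F) + a 3 * eval a (pderiv 3 F) = 0 := by
    have h := my_euler hF a
    rw [Fin.sum_univ_four, ha, mul_zero] at h
    exact h
  have t0 : ((0:Fin 4) = 0) = True := eq_true rfl
  have t1 : ((1:Fin 4) = 0) = False := eq_false (by decide)
  have t2 : ((2:Fin 4) = 0) = False := eq_false (by decide)
  have t3 : ((3:Fin 4) = 0) = False := eq_false (by decide)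
  rw [my_det_fin_four, my_det_fin_four]
  simp only [Matrix.of_apply, t0, t1, t2, t3, true_and, and_true, false_and, and_false,
    and_self, if_true, if_false]
  linear_combination
      (((-1 : ℂ)/4) * a 0 * eval a (pderiv 1 (pderiv 1 F)) * eval a (pderiv 2 (pderiv 2 F)) * eval a (pderiv 3 (pderiv 3 F)) + ((1 : ℂ)/4) * a 0 * eval a (pderiv 1 (pderiv 1 F)) * eval a (pderiv 2 (pderiv 3 F)) * eval a (pderiv 3 (pderiv 2 F)) + ((1 : ℂ)/4) * a 0 * eval a (pderiv 1 (pderiv 2 F)) * eval a (pderiv 2 (pderiv 1 F)) * eval a (pderiv 3 (pderiv 3 F)) + ((-1 : ℂ)/4) * a 0 * eval a (pderiv 1 (pderiv 2 F)) * eval a (pderiv 2 (pderiv 3 F)) * eval a (pderiv 3 (pderiv 1 F)) + ((-1 : ℂ)/4) * a 0 * eval a (pderiv 1 (pderiv 3 F)) * eval a (pderiv 2 (pderiv 1 F)) * eval a (pderiv 3 (pderiv 2 F)) + ((1 : ℂ)/4) * a 0 * eval a (pderiv 1 (pderiv 3 F)) * eval a (pderiv 2 (pderiv 2 F)) * eval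 a (pderiv 3 (pderiv 1 F))) * hd4 0 +
      (((1 : ℂ)/4) * a 0 * eval a (pderiv 0 (pderiv 1 F)) * eval a (pderiv 2 (pderiv 2 F)) * eval a (pderiv 3 (pderiv 3 F)) + ((-1 : ℂ)/4) * a 0 * eval a (pderiv 0 (pderiv 1 F)) * eval a (pderiv 2 (pderiv 3 F)) * eval a (pderiv 3 (pderiv 2 F)) + ((-1 : ℂ)/4) * a 0 * eval a (pderiv 0 (pderiv 2 F)) * eval a (pderiv 2 (pderiv 1 F)) * eval a (pderiv 3 (pderiv 3 F)) + ((1 : ℂ)/4) * a 0 * eval a (pderiv 0 (pderiv 2 F)) * eval a (pderiv 2 (pderiv 3 F)) * eval a (pderiv 3 (pderiv 1 F)) + ((1 : ℂ)/4) * a 0 * eval a (pderiv 0 (pderiv 3 F)) * eval a (pderiv 2 (pderiv 1 F)) * eval a (pderiv 3 (pderiv 2 F)) + ((-1 : ℂ)/4) * a 0 * eval a (pderiv 0 (pderiv 3 F)) * eval a (pderiv 2 (pderiv 2 F)) * eval a (pderiv 3 (pderiv 1 F)) + ((1 : ℂ)/2) * eval a (pderiv 1 F) * eval a (pderiv 2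 (pderiv 2 F)) * eval a (pderiv 3 (pderiv 3 F)) + ((-1 : ℂ)/2) * eval a (pderiv 1 F) * eval a (pderiv 2 (pderiv 3 F)) * eval a (pderiv 3 (pderiv 2 F)) + ((-1 : ℂ)/2) * eval a (pderiv 2 F) * eval a (pderiv 1 (pderiv 2 F)) * eval a (pderiv 3 (pderiv 3 F)) + ((1 : ℂ)/2) * eval a (pderiv 2 F) * eval a (pderiv 1 (pderiv 3 F)) * eval a (pderiv 3 (pderiv 2 F)) + ((1 : ℂ)/2) * eval a (pderiv 3 F) * eval a (pderiv 1 (pderiv 2 F)) * eval a (pderiv 2 (pderiv 3 F)) + ((-1 : ℂ)/2) * eval a (pderiv 3 F) * eval a (pderiv 1 (pderiv 3 F)) * eval a (pderiv 2 (pderiv 2 F))) * hd4 1 +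
      (((-1 : ℂ)/4) * a 0 * eval a (pderiv 0 (pderiv 1 F)) * eval a (pderiv 1 (pderiv 2 F)) * eval a (pderiv 3 (pderiv 3 F)) + ((1 : ℂ)/4) * a 0 * eval a (pderiv 0 (pderiv 1 F)) * eval a (pderiv 1 (pderiv 3 F)) * eval a (pderiv 3 (pderiv 2 F)) + ((1 : ℂ)/4) * a 0 * eval a (pderiv 0 (pderiv 2 F)) * eval a (pderiv 1 (pderiv 1 F)) * eval a (pderiv 3 (pderiv 3 F)) + ((-1 : ℂ)/4) * a 0 * eval a (pderiv 0 (pderiv 2 F)) * eval a (pderiv 1 (pderiv 3 F)) * eval a (pderiv 3 (pderiv 1 F)) + ((-1 : ℂ)/4) * a 0 * eval a (pderiv 0 (pderiv 3 F)) * eval a (pderiv 1 (pderiv 1 F)) * eval a (pderiv 3 (pderiv 2 F)) + ((1 : ℂ)/4) * a 0 * eval a (pderiv 0 (pderiv 3 F)) * eval a (pderiv 1 (pderiv 2 F)) * eval a (pderiv 3 (pderiv 1 F)) + ((-1 : ℂ)/2) * eval a (pderiv 1 F) * eval a (pderiv 2 (pderiv 1 F)) * eval a (pderiv 3 (pderiv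 3 F)) + ((1 : ℂ)/2) * eval a (pderiv 1 F) * eval a (pderiv 2 (pderiv 3 F)) * eval a (pderiv 3 (pderiv 1 F)) + ((1 : ℂ)/2) * eval a (pderiv 2 F) * eval a (pderiv 1 (pderiv 1 F)) * eval a (pderiv 3 (pderiv 3 F)) + ((-1 : ℂ)/2) * eval a (pderiv 2 F) * eval a (pderiv 1 (pderiv 3 F)) * eval a (pderiv 3 (pderiv 1 F)) + ((-1 : ℂ)/2) * eval a (pderiv 3 F) * eval a (pderiv 1 (pderiv 1 F)) * eval a (pderiv 2 (pderiv 3 F)) + ((1 : ℂ)/2) * eval a (pderiv 3 F) * eval a (pderiv 1 (pderiv 3 F)) * eval a (pderiv 2 (pderiv 1 F))) * hd4 2 +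
      (((1 : ℂ)/4) * a 0 * eval a (pderiv 0 (pderiv 1 F)) * eval a (pderiv 1 (pderiv 2 F)) * eval a (pderiv 2 (pderiv 3 F)) + ((-1 : ℂ)/4) * a 0 * eval a (pderiv 0 (pderiv 1 F)) * eval a (pderiv 1 (pderiv 3 F)) * eval a (pderiv 2 (pderiv 2 F)) + ((-1 : ℂ)/4) * a 0 * eval a (pderiv 0 (pderiv 2 F)) * eval a (pderiv 1 (pderiv 1 F)) * eval a (pderiv 2 (pderiv 3 F)) + ((1 : ℂ)/4) * a 0 * eval a (pderiv 0 (pderiv 2 F)) * eval a (pderiv 1 (pderiv 3 F)) * eval a (pderiv 2 (pderiv 1 F)) + ((1 : ℂ)/4) * a 0 * eval a (pderiv 0 (pderiv 3 F)) * eval a (pderiv 1 (pderiv 1 F)) * eval a (pderiv 2 (pderiv 2 F)) + ((-1 : ℂ)/4) * a 0 * eval a (pderiv 0 (pderiv 3 F)) * eval a (pderiv 1 (pderiv 2 F)) * eval a (pderiv 2 (pderiv 1 F)) + ((1 : ℂ)/2) * eval a (pderiv 1 F) * eval a (pderiv 2 (pderiv 1 F)) * eval a (pderiv 3 (pderiv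 2 F)) + ((-1 : ℂ)/2) * eval a (pderiv 1 F) * eval a (pderiv 2 (pderiv 2 F)) * eval a (pderiv 3 (pderiv 1 F)) + ((-1 : ℂ)/2) * eval a (pderiv 2 F) * eval a (pderiv 1 (pderiv 1 F)) * eval a (pderiv 3 (pderiv 2 F)) + ((1 : ℂ)/2) * eval a (pderiv 2 F) * eval a (pderiv 1 (pderiv 2 F)) * eval a (pderiv 3 (pderiv 1 F)) + ((1 : ℂ)/2) * eval a (pderiv 3 F) * eval a (pderiv 1 (pderiv 1 F)) * eval a (pderiv 2 (pderiv 2 F)) + ((-1 : ℂ)/2) * eval a (pderiv 3 F) * eval a (pderiv 1 (pderiv 2 F)) * eval a (pderiv 2 (pderiv 1 F))) * hd4 3 +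
      (((-1 : ℂ)/2) * eval a (pderiv 1 (pderiv 1 F)) * eval a (pderiv 2 (pderiv 2 F)) * eval a (pderiv 3 (pderiv 3 F)) + ((1 : ℂ)/2) * eval a (pderiv 1 (pderiv 1 F)) * eval a (pderiv 2 (pderiv 3 F)) * eval a (pderiv 3 (pderiv 2 F)) + ((1 : ℂ)/2) * eval a (pderiv 1 (pderiv 2 F)) * eval a (pderiv 2 (pderiv 1 F)) * eval a (pderiv 3 (pderiv 3 F)) + ((-1 : ℂ)/2) * eval a (pderiv 1 (pderiv 2 F)) * eval a (pderiv 2 (pderiv 3 F)) * eval a (pderiv 3 (pderiv 1 F)) + ((-1 : ℂ)/2) * eval a (pderiv 1 (pderiv 3 F)) * eval a (pderiv 2 (pderiv 1 F)) * eval a (pderiv 3 (pderiv 2 F)) + ((1 : ℂ)/2) * eval a (pderiv 1 (pderiv 3 F)) * eval a (pderiv 2 (pderiv 2 F)) * eval a (pderiv 3 (pderiv 1 F))) * he +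
      (((-1 : ℂ)/4) * a 0 * a 0 * eval a (pderiv 0 (pderiv 1 F)) * eval a (pderiv 2 (pderiv 2 F)) * eval a (pderiv 3 (pderiv 3 F)) + ((1 : ℂ)/4) * a 0 * a 0 * eval a (pderiv 0 (pderiv 1 F)) * eval a (pderiv 2 (pderiv 3 F)) * eval a (pderiv 3 (pderiv 2 F)) + ((1 : ℂ)/4) * a 0 * a 0 * eval a (pderiv 0 (pderiv 2 F)) * eval a (pderiv 2 (pderiv 1 F)) * eval a (pderiv 3 (pderiv 3 F)) + ((-1 : ℂ)/4) * a 0 * a 0 * eval a (pderiv 0 (pderiv 2 F)) * eval a (pderiv 2 (pderiv 3 F)) * eval a (pderiv 3 (pderiv 1 F)) + ((-1 : ℂ)/4) * a 0 * a 0 * eval a (pderiv 0 (pderiv 3 F)) * eval a (pderiv 2 (pderiv 1 F)) * eval a (pderiv 3 (pderiv 2 F)) + ((1 : ℂ)/4) * a 0 * a 0 * eval a (pderiv 0 (pderiv 3 F)) * eval a (pderiv 2 (pderiv 2 F)) * eval a (pderiv 3 (pderiv 1 F)) + ((-1 : ℂ)/4) * a 0 * a 1 * eval a (pderiv 1 (pderiv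 1 F)) * eval a (pderiv 2 (pderiv 2 F)) * eval a (pderiv 3 (pderiv 3 F)) + ((1 : ℂ)/4) * a 0 * a 1 * eval a (pderiv 1 (pderiv 1 F)) * eval a (pderiv 2 (pderiv 3 F)) * eval a (pderiv 3 (pderiv 2 F)) + ((1 : ℂ)/4) * a 0 * a 1 * eval a (pderiv 1 (pderiv 2 F)) * eval a (pderiv 2 (pderiv 1 F)) * eval a (pderiv 3 (pderiv 3 F)) + ((-1 : ℂ)/4) * a 0 * a 1 * eval a (pderiv 1 (pderiv 2 F)) * eval a (pderiv 2 (pderiv 3 F)) * eval a (pderiv 3 (pderiv 1 F)) + ((-1 : ℂ)/4) * a 0 * a 1 * eval a (pderiv 1 (pderiv 3 F)) * eval a (pderiv 2 (pderiv 1 F)) * eval a (pderiv 3 (pderiv 2 F)) + ((1 : ℂ)/4) * a 0 * a 1 * eval a (pderiv 1 (pderiv 3 F)) * eval a (pderiv 2 (pderiv 2 F)) * eval a (pderiv 3 (pderiv 1 F))) * hsym 0 1 +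
      (((1 : ℂ)/4) * a 0 * a 0 * eval a (pderiv 0 (pderiv 1 F)) * eval a (pderiv 1 (pderiv 2 F)) * eval a (pderiv 3 (pderiv 3 F)) + ((-1 : ℂ)/4) * a 0 * a 0 * eval a (pderiv 0 (pderiv 1 F)) * eval a (pderiv 1 (pderiv 3 F)) * eval a (pderiv 3 (pderiv 2 F)) + ((-1 : ℂ)/4) * a 0 * a 0 * eval a (pderiv 0 (pderiv 2 F)) * eval a (pderiv 1 (pderiv 1 F)) * eval a (pderiv 3 (pderiv 3 F)) + ((1 : ℂ)/4) * a 0 * a 0 * eval a (pderiv 0 (pderiv 2 F)) * eval a (pderiv 1 (pderiv 3 F)) * eval a (pderiv 3 (pderiv 1 F)) + ((1 : ℂ)/4) * a 0 * a 0 * eval a (pderiv 0 (pderiv 3 F)) * eval a (pderiv 1 (pderiv 1 F)) * eval a (pderiv 3 (pderiv 2 F)) + ((-1 : ℂ)/4) * a 0 * a 0 * eval a (pderiv 0 (pderiv 3 F)) * eval a (pderiv 1 (pderiv 2 F)) * eval a (pderiv 3 (pderiv 1 F)) + ((-1 : ℂ)/4) * a 0 * a 2 * eval a (pderiv 1 (pderiv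 1 F)) * eval a (pderiv 2 (pderiv 2 F)) * eval a (pderiv 3 (pderiv 3 F)) + ((1 : ℂ)/4) * a 0 * a 2 * eval a (pderiv 1 (pderiv 1 F)) * eval a (pderiv 2 (pderiv 3 F)) * eval a (pderiv 3 (pderiv 2 F)) + ((1 : ℂ)/4) * a 0 * a 2 * eval a (pderiv 1 (pderiv 2 F)) * eval a (pderiv 2 (pderiv 1 F)) * eval a (pderiv 3 (pderiv 3 F)) + ((-1 : ℂ)/4) * a 0 * a 2 * eval a (pderiv 1 (pderiv 2 F)) * eval a (pderiv 2 (pderiv 3 F)) * eval a (pderiv 3 (pderiv 1 F)) + ((-1 : ℂ)/4) * a 0 * a 2 * eval a (pderiv 1 (pderiv 3 F)) * eval a (pderiv 2 (pderiv 1 F)) * eval a (pderiv 3 (pderiv 2 F)) + ((1 : ℂ)/4) * a 0 * a 2 * eval a (pderiv 1 (pderiv 3 F)) * eval a (pderiv 2 (pderiv 2 F)) * eval a (pderiv 3 (pderiv 1 F))) * hsym 0 2 +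
      (((-1 : ℂ)/4) * a 0 * a 0 * eval a (pderiv 0 (pderiv 1 F)) * eval a (pderiv 1 (pderiv 2 F)) * eval a (pderiv 2 (pderiv 3 F)) + ((1 : ℂ)/4) * a 0 * a 0 * eval a (pderiv 0 (pderiv 1 F)) * eval a (pderiv 1 (pderiv 3 F)) * eval a (pderiv 2 (pderiv 2 F)) + ((1 : ℂ)/4) * a 0 * a 0 * eval a (pderiv 0 (pderiv 2 F)) * eval a (pderiv 1 (pderiv 1 F)) * eval a (pderiv 2 (pderiv 3 F)) + ((-1 : ℂ)/4) * a 0 * a 0 * eval a (pderiv 0 (pderiv 2 F)) * eval a (pderiv 1 (pderiv 3 F)) * eval a (pderiv 2 (pderiv 1 F)) + ((-1 : ℂ)/4) * a 0 * a 0 * eval a (pderiv 0 (pderiv 3 F)) * eval a (pderiv 1 (pderiv 1 F)) * eval a (pderiv 2 (pderiv 2 F)) + ((1 : ℂ)/4) * a 0 * a 0 * eval a (pderiv 0 (pderiv 3 F)) * eval a (pderiv 1 (pderiv 2 F)) * eval a (pderiv 2 (pderiv 1 F)) + ((-1 : ℂ)/4) * a 0 * a 3 * eval a (pderiv 1 (pderiv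 1 F)) * eval a (pderiv 2 (pderiv 2 F)) * eval a (pderiv 3 (pderiv 3 F)) + ((1 : ℂ)/4) * a 0 * a 3 * eval a (pderiv 1 (pderiv 1 F)) * eval a (pderiv 2 (pderiv 3 F)) * eval a (pderiv 3 (pderiv 2 F)) + ((1 : ℂ)/4) * a 0 * a 3 * eval a (pderiv 1 (pderiv 2 F)) * eval a (pderiv 2 (pderiv 1 F)) * eval a (pderiv 3 (pderiv 3 F)) + ((-1 : ℂ)/4) * a 0 * a 3 * eval a (pderiv 1 (pderiv 2 F)) * eval a (pderiv 2 (pderiv 3 F)) * eval a (pderiv 3 (pderiv 1 F)) + ((-1 : ℂ)/4) * a 0 * a 3 * eval a (pderiv 1 (pderiv 3 F)) * eval a (pderiv 2 (pderiv 1 F)) * eval a (pderiv 3 (pderiv 2 F)) + ((1 : ℂ)/4) * a 0 * a 3 * eval a (pderiv 1 (pderiv 3 F)) * eval a (pderiv 2 (pderiv 2 F)) * eval a (pderiv 3 (pderiv 1 F))) * hsym 0 3 +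
      (((1 : ℂ)/4) * a 0 * a 1 * eval a (pderiv 0 (pderiv 1 F)) * eval a (pderiv 1 (pderiv 2 F)) * eval a (pderiv 3 (pderiv 3 F)) + ((-1 : ℂ)/4) * a 0 * a 1 * eval a (pderiv 0 (pderiv 1 F)) * eval a (pderiv 1 (pderiv 3 F)) * eval a (pderiv 3 (pderiv 2 F)) + ((-1 : ℂ)/4) * a 0 * a 1 * eval a (pderiv 0 (pderiv 2 F)) * eval a (pderiv 1 (pderiv 1 F)) * eval a (pderiv 3 (pderiv 3 F)) + ((1 : ℂ)/4) * a 0 * a 1 * eval a (pderiv 0 (pderiv 2 F)) * eval a (pderiv 1 (pderiv 3 F)) * eval a (pderiv 3 (pderiv 1 F)) + ((1 : ℂ)/4) * a 0 * a 1 * eval a (pderiv 0 (pderiv 3 F)) * eval a (pderiv 1 (pderiv 1 F)) * eval a (pderiv 3 (pderiv 2 F)) + ((-1 : ℂ)/4) * a 0 * a 1 * eval a (pderiv 0 (pderiv 3 F)) * eval a (pderiv 1 (pderiv 2 F)) * eval a (pderiv 3 (pderiv 1 F)) + ((1 : ℂ)/4) * a 0 * a 2 * eval a (pderiv 0 (pderiv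 1 F)) * eval a (pderiv 2 (pderiv 2 F)) * eval a (pderiv 3 (pderiv 3 F)) + ((-1 : ℂ)/4) * a 0 * a 2 * eval a (pderiv 0 (pderiv 1 F)) * eval a (pderiv 2 (pderiv 3 F)) * eval a (pderiv 3 (pderiv 2 F)) + ((-1 : ℂ)/4) * a 0 * a 2 * eval a (pderiv 0 (pderiv 2 F)) * eval a (pderiv 2 (pderiv 1 F)) * eval a (pderiv 3 (pderiv 3 F)) + ((1 : ℂ)/4) * a 0 * a 2 * eval a (pderiv 0 (pderiv 2 F)) * eval a (pderiv 2 (pderiv 3 F)) * eval a (pderiv 3 (pderiv 1 F)) + ((1 : ℂ)/4) * a 0 * a 2 * eval a (pderiv 0 (pderiv 3 F)) * eval a (pderiv 2 (pderiv 1 F)) * eval a (pderiv 3 (pderiv 2 F)) + ((-1 : ℂ)/4) * a 0 * a 2 * eval a (pderiv 0 (pderiv 3 F)) * eval a (pderiv 2 (pderiv 2 F)) * eval a (pderiv 3 (pderiv 1 F))) * hsym 1 2 +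
      (((-1 : ℂ)/4) * a 0 * a 1 * eval a (pderiv 0 (pderiv 1 F)) * eval a (pderiv 1 (pderiv 2 F)) * eval a (pderiv 2 (pderiv 3 F)) + ((1 : ℂ)/4) * a 0 * a 1 * eval a (pderiv 0 (pderiv 1 F)) * eval a (pderiv 1 (pderiv 3 F)) * eval a (pderiv 2 (pderiv 2 F)) + ((1 : ℂ)/4) * a 0 * a 1 * eval a (pderiv 0 (pderiv 2 F)) * eval a (pderiv 1 (pderiv 1 F)) * eval a (pderiv 2 (pderiv 3 F)) + ((-1 : ℂ)/4) * a 0 * a 1 * eval a (pderiv 0 (pderiv 2 F)) * eval a (pderiv 1 (pderiv 3 F)) * eval a (pderiv 2 (pderiv 1 F)) + ((-1 : ℂ)/4) * a 0 * a 1 * eval a (pderiv 0 (pderiv 3 F)) * eval a (pderiv 1 (pderiv 1 F)) * eval a (pderiv 2 (pderiv 2 F)) + ((1 : ℂ)/4) * a 0 * a 1 * eval a (pderiv 0 (pderiv 3 F)) * eval a (pderiv 1 (pderiv 2 F)) * eval a (pderiv 2 (pderiv 1 F)) + ((1 : ℂ)/4) * a 0 * a 3 * eval a (pderiv 0 (pderiv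 1 F)) * eval a (pderiv 2 (pderiv 2 F)) * eval a (pderiv 3 (pderiv 3 F)) + ((-1 : ℂ)/4) * a 0 * a 3 * eval a (pderiv 0 (pderiv 1 F)) * eval a (pderiv 2 (pderiv 3 F)) * eval a (pderiv 3 (pderiv 2 F)) + ((-1 : ℂ)/4) * a 0 * a 3 * eval a (pderiv 0 (pderiv 2 F)) * eval a (pderiv 2 (pderiv 1 F)) * eval a (pderiv 3 (pderiv 3 F)) + ((1 : ℂ)/4) * a 0 * a 3 * eval a (pderiv 0 (pderiv 2 F)) * eval a (pderiv 2 (pderiv 3 F)) * eval a (pderiv 3 (pderiv 1 F)) + ((1 : ℂ)/4) * a 0 * a 3 * eval a (pderiv 0 (pderiv 3 F)) * eval a (pderiv 2 (pderiv 1 F)) * eval a (pderiv 3 (pderiv 2 F)) + ((-1 : ℂ)/4) * a 0 * a 3 * eval a (pderiv 0 (pderiv 3 F)) * eval a (pderiv 2 (pderiv 2 F)) * eval a (pderiv 3 (pderiv 1 F))) * hsym 1 3 +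
      (((-1 : ℂ)/4) * a 0 * a 2 * eval a (pderiv 0 (pderiv 1 F)) * eval a (pderiv 1 (pderiv 2 F)) * eval a (pderiv 2 (pderiv 3 F)) + ((1 : ℂ)/4) * a 0 * a 2 * eval a (pderiv 0 (pderiv 1 F)) * eval a (pderiv 1 (pderiv 3 F)) * eval a (pderiv 2 (pderiv 2 F)) + ((1 : ℂ)/4) * a 0 * a 2 * eval a (pderiv 0 (pderiv 2 F)) * eval a (pderiv 1 (pderiv 1 F)) * eval a (pderiv 2 (pderiv 3 F)) + ((-1 : ℂ)/4) * a 0 * a 2 * eval a (pderiv 0 (pderiv 2 F)) * eval a (pderiv 1 (pderiv 3 F)) * eval a (pderiv 2 (pderiv 1 F)) + ((-1 : ℂ)/4) * a 0 * a 2 * eval a (pderiv 0 (pderiv 3 F)) * eval a (pderiv 1 (pderiv 1 F)) * eval a (pderiv 2 (pderiv 2 F)) + ((1 : ℂ)/4) * a 0 * a 2 * eval a (pderiv 0 (pderiv 3 F)) * eval a (pderiv 1 (pderiv 2 F)) * eval a (pderiv 2 (pderiv 1 F)) + ((-1 : ℂ)/4) * a 0 * a 3 * eval a (pderiv 0 (pderiv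 1 F)) * eval a (pderiv 1 (pderiv 2 F)) * eval a (pderiv 3 (pderiv 3 F)) + ((1 : ℂ)/4) * a 0 * a 3 * eval a (pderiv 0 (pderiv 1 F)) * eval a (pderiv 1 (pderiv 3 F)) * eval a (pderiv 3 (pderiv 2 F)) + ((1 : ℂ)/4) * a 0 * a 3 * eval a (pderiv 0 (pderiv 2 F)) * eval a (pderiv 1 (pderiv 1 F)) * eval a (pderiv 3 (pderiv 3 F)) + ((-1 : ℂ)/4) * a 0 * a 3 * eval a (pderiv 0 (pderiv 2 F)) * eval a (pderiv 1 (pderiv 3 F)) * eval a (pderiv 3 (pderiv 1 F)) + ((-1 : ℂ)/4) * a 0 * a 3 * eval a (pderiv 0 (pderiv 3 F)) * eval a (pderiv 1 (pderiv 1 F)) * eval a (pderiv 3 (pderiv 2 F)) + ((1 : ℂ)/4) * a 0 * a 3 * eval a (pderiv 0 (pderiv 3 F)) * eval a (pderiv 1 (pderiv 2 F)) * eval a (pderiv 3 (pderiv 1 F))) * hsym 2 3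
end

section
/- Let F(x_0,...,x_3) ∈ ℂ[x_0,...,x_3] be a cubic form defining a surface X ⊂ ℙ³, and let V ⊂ ℙ⁴ be the cubic threefold defined by F(x_0,...,x_3) + x_4³. Let L ⊂ ℙ⁴ be a line contained in V that is not contained in the hyperplane {x_4 = 0}, meeting that hyperplane in the point [a_0:...:a_3:0] and containing a point [b_0:...:b_3:1]. Then [a_0:...:a_3] ≠ [b_0:...:b_3] (so ρ(L) = {[a_0 t_0 + b_0 t_1 : ... : a_3 t_0 + b_3 t_1]} is a line in ℙ³), and F(a_0 t_0 + b_0 t_1, ..., a_3 t_0 + b_3 t_1) = -t_1³ identically, i.e., the image line meets X only at [a_0:...:a_3], with multiplicity 3. -/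
open MvPolynomial

/-- a line on the cubic threefold `{F + x₄³ = 0}` not contained in
`{x₄ = 0}`, through `[a:0]` and `[b:1]`, projects to a line of `ℙ³` meeting the
cubic surface `{F = 0}` only at `[a]`, with multiplicity 3. -/
theorem line_on_triple_cover_projects (F : MvPolynomial (Fin 4) ℂ)
    (hF : F.IsHomogeneous 3) (a b : Fin 4 → ℂ) (ha : a ≠ 0)
    (hL : ∀ t0 t1 : ℂ, eval (fun i => a i * t0 + b i * t1) F + t1 ^ 3 = 0) :
    (¬ ∃ c : ℂ, b = fun i => c * a i) ∧
    (∀ t0 t1 : ℂ, eval (fun i => a i * t0 + b i * t1) F = -t1 ^ 3) := by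
  constructor
  · rintro ⟨c, rfl⟩
    have h1 := hL (-c) 1
    have h0 := hL 0 0
    simp only [mul_zero, add_zero, zero_pow, Ne, OfNat.ofNat_ne_zero,
      not_false_eq_true] at h0
    have he : (fun i => a i * (-c) + c * a i * 1) = fun _ : Fin 4 => (0 : ℂ) := by
      funext i; ring
    rw [he] at h1
    rw [h0] at h1
    simp at h1
  · intro t0 t1
    have := hL t0 t1
    linear_combination this
end

section
/- In the ring R = ℤ[s,t]/(t⁴, s⁴ + s³t + s²t² + st³ + t⁴), with the degree map normalized so that deg(s²t³) = 1, one has deg((3s)² · (6s²t + 15st² + 6t³)) = -81. -/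
/-- in the Chow ring of the flag variety `Γ(ℙ³)`
(`ℤ[s,t]` modulo the relations `t⁴ = 0` and `s³+s²t+st²+t³ = 0`, whence also
`s⁴+s³t+s²t²+st³+t⁴ = 0`), the degree of `(3s)²·(6s²t+15st²+6t³)`, i.e. its
expression as a multiple of the point class `s²t³`, is `-81`. -/
theorem chow_degree_Yinf_squared (R : Type*) [CommRing R] (s t : R)
    (h1 : t ^ 4 = 0)
    (h2 : s ^ 4 + s ^ 3 * t + s ^ 2 * t ^ 2 + s * t ^ 3 + t ^ 4 = 0)
    (h3 : s ^ 3 + s ^ 2 * t + s * t ^ 2 + t ^ 3 = 0) :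
    (3 * s) ^ 2 * (6 * s ^ 2 * t + 15 * s * t ^ 2 + 6 * t ^ 3)
      = -81 * (s ^ 2 * t ^ 3) := by
  linear_combination 54 * t * h2 + 81 * t ^ 2 * h3 - (135 * s + 135 * t) * h1
end

section
/- Let V be a 4-dimensional vector space over ℂ with basis x_0,...,x_3 and dual basis x_0^∨,...,x_3^∨, and let F ∈ Sym³V define a nonsingular cubic surface (i.e., F and its partials have no common zero in ℙ³). Then the map ν : V^∨ ⊗ V → Sym³V defined by x_i^∨ ⊗ A ↦ A·∂F/∂x_i is injective. -/
open MvPolynomial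

namespace NuAux

noncomputable section

open Finset

abbrev PP := MvPolynomial (Fin 4) ℂ



lemma pderiv_pderiv (i j : Fin 4) (f : PP) :
    pderiv i (pderiv j f) = pderiv j (pderiv i f) := by
  induction f using MvPolynomial.induction_on' with
  | add p q hp hq => simp [hp, hq]
  | monomial s a =>
    rcases eq_or_ne i j with rfl | hij
    · rfl
    · simp only [pderiv_monomial]
      rw [Finsupp.tsub_apply, Finsupp.tsub_apply,
        Finsupp.single_eq_of_ne' hij, Finsupp.single_eq_of_ne' (Ne.symm hij),
        tsub_zero, tsub_zero, tsub_tsub, tsub_tsub, add_comm]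
      ring_nf

lemma degree_univ (d : Fin 4 →₀ ℕ) : d.degree = ∑ i : Fin 4, d i :=
  Finset.sum_subset (Finset.subset_univ _)
    (fun i _ hi => Finsupp.notMem_support_iff.mp hi)

lemma degree_sub_single {s : Fin 4 →₀ ℕ} {i : Fin 4} (h : s i ≠ 0) :
    (s - Finsupp.single i 1).degree + 1 = s.degree := by
  rw [degree_univ, degree_univ,
    ← Finset.sum_erase_add _ _ (Finset.mem_univ i),
    ← Finset.sum_erase_add (f := fun j => s j) _ (Finset.mem_univ i)]
  have he : ∑ j ∈ Finset.univ.erase i, (s - Finsupp.single i 1 : Fin 4 →₀ ℕ) j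
      = ∑ j ∈ Finset.univ.erase i, s j := by
    apply Finset.sum_congr rfl
    intro j hj
    rw [Finsupp.tsub_apply, Finsupp.single_eq_of_ne' (Finset.ne_of_mem_erase hj).symm, tsub_zero]
  have hi : (s - Finsupp.single i 1 : Fin 4 →₀ ℕ) i = s i - 1 := by
    rw [Finsupp.tsub_apply, Finsupp.single_eq_same]
  rw [he, hi]
  omega

lemma isHomog_pderiv {n : ℕ} {f : PP} (hf : f.IsHomogeneous n) (i : Fin 4) :
    (pderiv i f).IsHomogeneous (n - 1) := by
  conv_lhs => rw [← support_sum_monomial_coeff f]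
  rw [map_sum]
  apply IsHomogeneous.sum
  intro s hs
  by_cases h : s i = 0
  · simp [pderiv_monomial, h, isHomogeneous_zero]
  · rw [pderiv_monomial]
    apply isHomogeneous_monomial
    have hdeg : s.degree = n := by
      by_contra hd
      exact (mem_support_iff.mp hs) (hf.coeff_eq_zero hd)
    have := degree_sub_single (i := i) h
    omega

lemma euler_monomial {s : Fin 4 →₀ ℕ} {a : ℂ} :
    ∑ i : Fin 4, X i * pderiv i (monomial s a) = C (s.degree : ℂ) * monomial s a := by
  have key : ∀ i : Fin 4, X i * pderiv i (monomial s a) = monomial s (a * s i) := by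
    intro i
    by_cases h : s i = 0
    · simp [pderiv_monomial, h]
    · have hle : Finsupp.single i 1 ≤ s := by rw [Finsupp.single_le_iff]; omega
      rw [pderiv_monomial, X, monomial_mul, add_tsub_cancel_of_le hle, one_mul]
  simp only [key]
  rw [← map_sum (monomial s), C_mul_monomial, ← Finset.mul_sum, ← Nat.cast_sum,
    ← degree_univ, mul_comm]

lemma euler {n : ℕ} {H : PP} (hH : H.IsHomogeneous n) :
    ∑ i : Fin 4, X i * pderiv i H = C (n : ℂ) * H := by
  conv_lhs => rw [← support_sum_monomial_coeff H]
  conv_rhs => rw [← support_sum_monomial_coeff H]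
  simp only [map_sum, Finset.mul_sum]
  rw [Finset.sum_comm]
  apply Finset.sum_congr rfl
  intro s hs
  rw [euler_monomial]
  have hdeg : s.degree = n := by
    by_contra hd
    exact (mem_support_iff.mp hs) (hH.coeff_eq_zero hd)
  rw [hdeg]

/-- Directional derivative. -/
def Dv (a : Fin 4 → ℂ) (G : PP) : PP := ∑ i : Fin 4, C (a i) * pderiv i G

/-- The derivation attached to the matrix `M`. -/
def DM (M : Matrix (Fin 4) (Fin 4) ℂ) (G : PP) : PP :=
  ∑ i : Fin 4, ∑ j : Fin 4, C (M i j) * X j * pderiv i G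

lemma Dv_zero_fun (G : PP) : Dv 0 G = 0 := by simp [Dv]

lemma Dv_zero (a : Fin 4 → ℂ) : Dv a 0 = 0 := by simp [Dv]

lemma Dv_add (a : Fin 4 → ℂ) (G H : PP) : Dv a (G + H) = Dv a G + Dv a H := by
  simp [Dv, mul_add, Finset.sum_add_distrib]

lemma Dv_C_mul (a : Fin 4 → ℂ) (r : ℂ) (G : PP) : Dv a (C r * G) = C r * Dv a G := by
  simp only [Dv, pderiv_C_mul, Finset.mul_sum]
  apply Finset.sum_congr rfl; intro i _; ring

lemma Dv_sum {ι : Type*} (s : Finset ι) (a : Fin 4 → ℂ) (f : ι → PP) :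
    Dv a (∑ x ∈ s, f x) = ∑ x ∈ s, Dv a (f x) := by
  simp only [Dv, map_sum, Finset.mul_sum]
  rw [Finset.sum_comm]

lemma Dv_smul_fun (r : ℂ) (a : Fin 4 → ℂ) (G : PP) : Dv (r • a) G = C r * Dv a G := by
  simp only [Dv, Pi.smul_apply, smul_eq_mul, map_mul, Finset.mul_sum]
  apply Finset.sum_congr rfl; intro i _; ring

lemma pderiv_Dv (i : Fin 4) (a : Fin 4 → ℂ) (G : PP) :
    pderiv i (Dv a G) = Dv a (pderiv i G) := by
  simp only [Dv, map_sum, pderiv_C_mul]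
  exact Finset.sum_congr rfl fun k _ => by rw [pderiv_pderiv]

lemma Dv_comm (a b : Fin 4 → ℂ) (G : PP) : Dv a (Dv b G) = Dv b (Dv a G) := by
  simp only [Dv, Dv_sum, map_sum, pderiv_C_mul, Finset.mul_sum]
  rw [Finset.sum_comm]
  apply Finset.sum_congr rfl; intro i _
  apply Finset.sum_congr rfl; intro j _
  rw [pderiv_pderiv]; ring

lemma Dv_single (i : Fin 4) (G : PP) : Dv (Pi.single i 1) G = pderiv i G := by
  rw [Dv, Finset.sum_eq_single i]
  · simp
  · intro b _ hb; simp [Pi.single_eq_of_ne hb]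
  · simp

lemma Dv_homog {n : ℕ} {G : PP} (h : G.IsHomogeneous n) (a : Fin 4 → ℂ) :
    (Dv a G).IsHomogeneous (n - 1) := by
  apply IsHomogeneous.sum
  intro i _
  exact (isHomog_pderiv h i).C_mul _

lemma Dv_X_mul (a : Fin 4 → ℂ) (j : Fin 4) (H : PP) :
    Dv a (X j * H) = C (a j) * H + X j * Dv a H := by
  simp only [Dv, pderiv_mul, mul_add, Finset.sum_add_distrib, Finset.mul_sum]
  congr 1
  · rw [Finset.sum_eq_single j]
    · simp
    · intro b _ hb; simp [pderiv_X_of_ne (Ne.symm hb)]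
    · simp
  · apply Finset.sum_congr rfl; intro i _; ring

lemma comm_DM (M : Matrix (Fin 4) (Fin 4) ℂ) (a : Fin 4 → ℂ) (G : PP) :
    Dv a (DM M G) = DM M (Dv a G) + Dv (M.mulVec a) G := by
  rw [DM, Dv_sum]
  simp only [Dv_sum, mul_assoc, Dv_C_mul, Dv_X_mul]
  rw [DM]
  simp only [mul_add, Finset.sum_add_distrib, mul_assoc]
  rw [add_comm]
  refine congrArg₂ (· + ·) ?_ ?_
  · apply Finset.sum_congr rfl; intro i _
    apply Finset.sum_congr rfl; intro j _
    rw [pderiv_Dv]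
  · rw [Dv]
    apply Finset.sum_congr rfl; intro i _
    rw [Matrix.mulVec, dotProduct, map_sum, Finset.sum_mul]
    apply Finset.sum_congr rfl; intro j _
    rw [map_mul]; ring


lemma homog0_eq_C {p : PP} (h : p.IsHomogeneous 0) : p = C (coeff 0 p) := by
  ext d
  rcases eq_or_ne d 0 with rfl | hd
  · simp
  · rw [h.coeff_eq_zero (by rwa [Ne, Finsupp.degree_eq_zero_iff])]
    rw [coeff_C, if_neg (Ne.symm hd)]

lemma eval_charpoly (M : Matrix (Fin 4) (Fin 4) ℂ) (l : ℂ) :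
    M.charpoly.eval l = (M - l • 1).det := by
  rw [Matrix.charpoly, ← Polynomial.coe_evalRingHom, RingHom.map_det]
  have : (Matrix.charmatrix M).map (Polynomial.evalRingHom l) = l • 1 - M := by
    ext i j
    rcases eq_or_ne i j with rfl | hij
    · simp [Matrix.charmatrix_apply_eq, Matrix.one_apply]
    · simp [Matrix.charmatrix_apply_ne _ _ _ hij, Matrix.one_apply_ne hij]
  rw [RingHom.mapMatrix_apply, this]
  have h2 : l • (1 : Matrix (Fin 4) (Fin 4) ℂ) - M = -(M - l • 1) := (neg_sub _ _).symm
  rw [h2, Matrix.det_neg]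
  norm_num

lemma nilpotent_of_eigen_zero (M : Matrix (Fin 4) (Fin 4) ℂ)
    (h : ∀ l : ℂ, (M - l • 1).det = 0 → l = 0) : M ^ 4 = 0 := by
  have hsplits := IsAlgClosed.splits M.charpoly
  have hcard : M.charpoly.roots.card = 4 := by
    rw [(Polynomial.splits_iff_card_roots).mp hsplits, Matrix.charpoly_natDegree_eq_dim,
      Fintype.card_fin]
  have hroots : M.charpoly.roots = Multiset.replicate 4 0 := by
    rw [Multiset.eq_replicate]
    refine ⟨hcard, fun b hb => ?_⟩
    have hr : M.charpoly.eval b = 0 := Polynomial.isRoot_of_mem_roots hb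
    rw [eval_charpoly] at hr
    exact h b hr
  have hcp : M.charpoly = Polynomial.X ^ 4 := by
    have := hsplits.eq_prod_roots_of_monic (M.charpoly_monic)
    rw [hroots] at this
    simpa [pow_succ, mul_assoc] using this
  have hCH := M.aeval_self_charpoly
  rw [hcp] at hCH
  simpa using hCH


end

end NuAux

open NuAux

set_option maxHeartbeats 1000000 in
/-- for a nonsingular cubic form `F`, the map
`ν : V^∨ ⊗ V → Sym³V`, `x_i^∨ ⊗ A ↦ A·∂F/∂x_i`, is injective.  An element of
`V^∨ ⊗ V` is written as a matrix `M = (M i j)` via `Σ M i j · x_i^∨ ⊗ x_j`. -/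

theorem nu_injective (F : MvPolynomial (Fin 4) ℂ) (hF : F.IsHomogeneous 3)
    (hns : ∀ a : Fin 4 → ℂ, (∀ i : Fin 4, eval a (pderiv i F) = 0) → a = 0)
    (M : Matrix (Fin 4) (Fin 4) ℂ)
    (hM : (∑ i : Fin 4, ∑ j : Fin 4, C (M i j) * X j * pderiv i F) = 0) :
    M = 0 := by
  classical
  by_contra hMne
  have hMF : DM M F = 0 := hM
  -- basic homogeneity facts
  have hD1 : ∀ c : Fin 4 → ℂ, (Dv c F).IsHomogeneous 2 := fun c => by
    simpa using Dv_homog hF c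
  have hD2 : ∀ b c : Fin 4 → ℂ, (Dv b (Dv c F)).IsHomogeneous 1 := fun b c => by
    simpa using Dv_homog (hD1 c) b
  have hD3 : ∀ a b c : Fin 4 → ℂ, (Dv a (Dv b (Dv c F))).IsHomogeneous 0 := fun a b c => by
    simpa using Dv_homog (hD2 b c) a
  -- Step 1: the three-term identity
  have h1 : ∀ c : Fin 4 → ℂ, DM M (Dv c F) + Dv (M.mulVec c) F = 0 := by
    intro c
    have h := comm_DM M c F
    rw [hMF, Dv_zero] at h
    linear_combination -h
  have h2 : ∀ b c : Fin 4 → ℂ,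
      DM M (Dv b (Dv c F)) + Dv (M.mulVec b) (Dv c F) + Dv b (Dv (M.mulVec c) F) = 0 := by
    intro b c
    have h := congrArg (Dv b) (h1 c)
    rw [Dv_add, Dv_zero, comm_DM] at h
    linear_combination h
  have identity3 : ∀ a b c : Fin 4 → ℂ,
      Dv (M.mulVec a) (Dv b (Dv c F)) + Dv a (Dv (M.mulVec b) (Dv c F))
        + Dv a (Dv b (Dv (M.mulVec c) F)) = 0 := by
    intro a b c
    have h := congrArg (Dv a) (h2 b c)
    rw [Dv_add, Dv_add, Dv_zero, comm_DM] at h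
    have hconst : DM M (Dv a (Dv b (Dv c F))) = 0 := by
      rw [homog0_eq_C (hD3 a b c), DM]
      simp [pderiv_C]
    linear_combination h - hconst
  -- Euler evaluation
  have eulerEval : ∀ (n : ℕ) (H : PP), H.IsHomogeneous n → ∀ a : Fin 4 → ℂ,
      eval a (Dv a H) = n * eval a H := by
    intro n H hH a
    have h := congrArg (eval a) (euler hH)
    simpa [Dv] using h
  have evtt : ∀ a c : Fin 4 → ℂ,
      eval a (Dv a (Dv a (Dv c F))) = 2 * ∑ k : Fin 4, c k * eval a (pderiv k F) := by
    intro a c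
    have hexp : Dv c F = ∑ k : Fin 4, C (c k) * pderiv k F := rfl
    rw [hexp, Dv_sum, Dv_sum]
    simp only [Dv_C_mul]
    rw [map_sum, Finset.mul_sum]
    apply Finset.sum_congr rfl
    intro k _
    have hk2 : (pderiv k F).IsHomogeneous 2 := by simpa using isHomog_pderiv hF k
    have hk1 : (Dv a (pderiv k F)).IsHomogeneous 1 := by simpa using Dv_homog hk2 a
    rw [map_mul, eval_C, eulerEval 1 _ hk1 a, eulerEval 2 _ hk2 a]
    push_cast
    ring
  -- eigenvalue closure
  have closure : ∀ l : ℂ, (M - l • 1).det = 0 → (M - (-2 * l) • 1).det = 0 := by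
    intro l hl
    obtain ⟨v, hv0, hv⟩ := (Matrix.exists_mulVec_eq_zero_iff).mpr hl
    have heig : M.mulVec v = l • v := by
      rwa [Matrix.sub_mulVec, Matrix.smul_mulVec, Matrix.one_mulVec, sub_eq_zero] at hv
    have hwne : (fun i => eval v (pderiv i F)) ≠ 0 := by
      intro h0
      exact hv0 (hns v fun i => congrFun h0 i)
    have hrel : ∀ j : Fin 4, ∑ i : Fin 4, M i j * eval v (pderiv i F)
        = (-2 * l) * eval v (pderiv j F) := by
      intro j
      have h3 := identity3 v v (Pi.single j 1)
      rw [heig, Dv_smul_fun, Dv_smul_fun, Dv_C_mul] at h3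
      have h4 := congrArg (eval v) h3
      simp only [map_add, map_mul, map_zero, eval_C, evtt] at h4
      have hsingle : ∑ k : Fin 4, (Pi.single j 1 : Fin 4 → ℂ) k * eval v (pderiv k F)
          = eval v (pderiv j F) := by
        rw [Finset.sum_eq_single j]
        · simp
        · intro b _ hb; simp [Pi.single_eq_of_ne hb]
        · simp
      have hmv : ∑ k : Fin 4, M.mulVec (Pi.single j 1) k * eval v (pderiv k F)
          = ∑ i : Fin 4, M i j * eval v (pderiv i F) := by
        apply Finset.sum_congr rfl
        intro k _
        congr 1
        simp [Matrix.mulVec, dotProduct, Pi.single_apply, mul_ite, Finset.sum_ite_eq]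
      rw [hsingle, hmv] at h4
      linear_combination h4 / 2
    have hker : (M - (-2 * l) • 1).transpose.mulVec (fun i => eval v (pderiv i F)) = 0 := by
      ext j
      simp only [Matrix.mulVec, dotProduct, Matrix.transpose_apply, Matrix.sub_apply,
        Matrix.smul_apply, Matrix.one_apply, smul_eq_mul, mul_ite, mul_one, mul_zero, sub_mul,
        ite_mul, zero_mul, Finset.sum_sub_distrib, Finset.sum_ite_eq, Finset.mem_univ, if_true,
        Pi.zero_apply]
      rw [hrel j]; simp [Finset.sum_ite_eq']
    rw [← Matrix.det_transpose, ← Matrix.exists_mulVec_eq_zero_iff]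
    exact ⟨_, hwne, hker⟩
  -- nilpotency
  have hM4 : M ^ 4 = 0 := by
    apply nilpotent_of_eigen_zero
    intro l hl
    by_contra hlne
    have hmem : ∀ n : ℕ, ((-2:ℂ)^n * l) ∈ {x : ℂ | (M - x • 1).det = 0} := by
      intro n
      induction n with
      | zero => simpa using hl
      | succ n ih =>
        have h := closure _ ih
        have he : (-2:ℂ)^(n+1) * l = -2 * ((-2)^n * l) := by ring
        rw [Set.mem_setOf_eq, he]
        exact h
    have hinj : Function.Injective (fun n : ℕ => (-2:ℂ)^n * l) := by
      intro m n h
      simp only at h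
      have h2 : (-2:ℂ)^m = (-2)^n := mul_right_cancel₀ hlne h
      have h3 : (2:ℝ)^m = (2:ℝ)^n := by
        have h5 := congrArg norm h2
        simpa [norm_pow, norm_neg] using h5
      have h6 : (2:ℕ)^m = 2^n := by exact_mod_cast h3
      exact Nat.pow_right_injective (le_refl 2) h6
    have hfin : Set.Finite {x : ℂ | (M - x • 1).det = 0} := by
      apply Set.Finite.subset (Polynomial.finite_setOf_isRoot
        (p := M.charpoly) (M.charpoly_monic.ne_zero))
      intro x hx
      simp only [Set.mem_setOf_eq] at hx ⊢
      rw [Polynomial.IsRoot, eval_charpoly]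
      exact hx
    exact hfin.not_infinite (Set.infinite_of_injective_forall_mem hinj hmem)
  -- minimal nilpotency index
  have hex : ∃ m, M ^ m = 0 := ⟨4, hM4⟩
  have hm0 : M ^ (Nat.find hex) = 0 := Nat.find_spec hex
  set m := Nat.find hex with hmdef
  have hm1 : m ≠ 0 := by
    intro h
    rw [h, pow_zero] at hm0
    exact one_ne_zero hm0
  have hm2 : m ≠ 1 := by
    intro h
    rw [h, pow_one] at hm0
    exact hMne hm0
  set k := m - 1 with hkdef
  have hkpos : 1 ≤ k := by omega
  have hk1 : M ^ k ≠ 0 := Nat.find_min hex (by omega)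
  have hk2 : M ^ (k + 1) = 0 := by
    rw [show k + 1 = m by omega]
    exact hm0
  have hpow0 : ∀ n, k < n → M ^ n = 0 := by
    intro n hn
    rw [show n = (k + 1) + (n - (k + 1)) by omega, pow_add, hk2, zero_mul]
  obtain ⟨v, hv⟩ : ∃ v, (M ^ k).mulVec v ≠ 0 := by
    by_contra h
    push_neg at h
    apply hk1
    ext i j
    have h5 := congrFun (h (Pi.single j 1)) i
    simpa [Matrix.mulVec, dotProduct, Pi.single_apply, mul_ite,
      Finset.sum_ite_eq] using h5
  set u : ℕ → Fin 4 → ℂ := fun n => (M ^ n).mulVec v with hu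
  have huS : ∀ n, M.mulVec (u n) = u (n + 1) := by
    intro n
    rw [hu]
    simp only
    rw [Matrix.mulVec_mulVec, ← pow_succ']
  have hu0 : ∀ n, k < n → u n = 0 := by
    intro n hn
    rw [hu]
    simp only
    rw [hpow0 n hn, Matrix.zero_mulVec]
  obtain ⟨T, hT⟩ : ∃ T : ℕ → ℕ → (Fin 4 → ℂ) → PP,
      ∀ t j c, T t j c = Dv (u t) (Dv (u j) (Dv c F)) := ⟨_, fun _ _ _ => rfl⟩
  have keyT : ∀ (t j : ℕ) (c : Fin 4 → ℂ),
      T (t + 1) j c + T t (j + 1) c = - T t j (M.mulVec c) := by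
    intro t j c
    rw [hT, hT, hT]
    have h := identity3 (u t) (u j) c
    rw [huS t, huS j] at h
    linear_combination h
  have hT0L : ∀ t j (c : Fin 4 → ℂ), k < t → T t j c = 0 := by
    intro t j c h
    rw [hT, hu0 t h, Dv_zero_fun]
  have hT0R : ∀ t j (c : Fin 4 → ℂ), k < j → T t j c = 0 := by
    intro t j c h
    rw [hT, hu0 j h, Dv_zero_fun, Dv_zero]
  have chain : ∀ n (c : Fin 4 → ℂ),
      ∑ t ∈ Finset.range (n + 1), (n.choose t : ℂ) • T t (n - t) c
        = ((-1 : ℂ) ^ n) • T 0 0 ((M ^ n).mulVec c) := by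
    intro n
    induction n with
    | zero => intro c; simp
    | succ n ih =>
      intro c
      have e1 : (M ^ (n + 1)).mulVec c = (M ^ n).mulVec (M.mulVec c) := by
        rw [Matrix.mulVec_mulVec, ← pow_succ]
      have hrhs : ((-1 : ℂ) ^ (n + 1)) • T 0 0 ((M ^ (n + 1)).mulVec c)
          = - ∑ t ∈ Finset.range (n + 1),
              (n.choose t : ℂ) • T t (n - t) (M.mulVec c) := by
        rw [e1, ih (M.mulVec c), pow_succ, mul_comm, mul_smul, neg_one_smul]
      rw [hrhs]
      have lhs1 : ∑ t ∈ Finset.range (n + 2),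
            ((n + 1).choose t : ℂ) • T t (n + 1 - t) c
          = (∑ t ∈ Finset.range (n + 1), (n.choose t : ℂ) • T (t + 1) (n - t) c)
            + ∑ t ∈ Finset.range (n + 1), (n.choose t : ℂ) • T t (n + 1 - t) c := by
        rw [Finset.sum_range_succ' (fun t => ((n + 1).choose t : ℂ) • T t (n + 1 - t) c) (n + 1)]
        have hterm : ∀ t, ((n + 1).choose (t + 1) : ℂ) • T (t + 1) (n + 1 - (t + 1)) c
            = (n.choose t : ℂ) • T (t + 1) (n - t) c
              + (n.choose (t + 1) : ℂ) • T (t + 1) (n - t) c := by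
          intro t
          rw [Nat.succ_sub_succ n t, Nat.choose_succ_succ, Nat.cast_add, add_smul]
        simp only [hterm]
        rw [Finset.sum_add_distrib]
        have hsec : (∑ t ∈ Finset.range (n + 1), (n.choose (t + 1) : ℂ) • T (t + 1) (n - t) c)
            + ((n + 1).choose 0 : ℂ) • T 0 (n + 1 - 0) c
            = ∑ t ∈ Finset.range (n + 1), (n.choose t : ℂ) • T t (n + 1 - t) c := by
          have hs := Finset.sum_range_succ'
            (fun t => (n.choose t : ℂ) • T t (n + 1 - t) c) (n + 1)
          have hs2 : ∑ t ∈ Finset.range (n + 2), (n.choose t : ℂ) • T t (n + 1 - t) c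
              = ∑ t ∈ Finset.range (n + 1), (n.choose t : ℂ) • T t (n + 1 - t) c := by
            rw [Finset.sum_range_succ]
            simp
          rw [← hs2, hs]
          congr 1
          · apply Finset.sum_congr rfl
            intro t ht
            rw [Nat.succ_sub_succ n t]
          · simp
        rw [add_assoc, hsec]
      rw [lhs1, ← Finset.sum_add_distrib, ← Finset.sum_neg_distrib]
      apply Finset.sum_congr rfl
      intro t ht
      have htn : t ≤ n := Nat.lt_succ_iff.mp (Finset.mem_range.mp ht)
      rw [show n + 1 - t = (n - t) + 1 by omega, ← smul_add, keyT t (n - t) c, smul_neg]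
  -- conclude
  have hfin2 : ∀ c : Fin 4 → ℂ, T k k c = 0 := by
    intro c
    have h := chain (2 * k) c
    rw [hpow0 (2 * k) (by omega), Matrix.zero_mulVec, hT, Dv_zero_fun, Dv_zero, Dv_zero,
      smul_zero] at h
    rw [Finset.sum_eq_single k] at h
    · rw [show 2 * k - k = k by omega] at h
      have hch : ((2 * k).choose k : ℂ) ≠ 0 := by
        exact_mod_cast Nat.pos_iff_ne_zero.mp (Nat.choose_pos (by omega))
      exact (smul_eq_zero.mp h).resolve_left hch
    · intro t ht htne
      rcases lt_or_gt_of_ne htne with h1 | h2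
      · rw [hT0R t (2 * k - t) c (by omega), smul_zero]
      · rw [hT0L t (2 * k - t) c h2, smul_zero]
    · intro hk
      exact absurd (Finset.mem_range.mpr (by omega)) hk
  apply hv
  apply hns
  intro i
  have h := congrArg (eval (u k)) ((hT k k (Pi.single i 1)).symm.trans (hfin2 (Pi.single i 1)))
  rw [evtt, map_zero] at h
  have hsingle : ∑ j : Fin 4, (Pi.single i 1 : Fin 4 → ℂ) j * eval (u k) (pderiv j F)
      = eval (u k) (pderiv i F) := by
    rw [Finset.sum_eq_single i]
    · simp
    · intro b _ hb; simp [Pi.single_eq_of_ne hb]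
    · simp
  rw [hsingle] at h
  linear_combination h / 2
end

section
/- Let V be a 4-dimensional complex vector space with basis x_0,...,x_3. The map δ₁ : V ⊗ Sym³V → Sym²V ⊗ Sym²V defined by A ⊗ B ↦ Σ_{i=0}^{3} (A·x_i) ⊗ (∂B/∂x_i) is injective. -/
open MvPolynomial

private lemma coeff_pderiv' {σ : Type*} [DecidableEq σ] (i : σ) (m : σ →₀ ℕ)
    (p : MvPolynomial σ ℂ) :
    coeff m (pderiv i p) = ((m i : ℂ) + 1) * coeff (m + Finsupp.single i 1) p := by
  induction p using MvPolynomial.induction_on' with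
  | add p q hp hq => simp [hp, hq, mul_add]
  | monomial s a =>
    rw [pderiv_monomial, coeff_monomial, coeff_monomial]
    by_cases hs : s = m + Finsupp.single i 1
    · subst hs
      have h1 : m + Finsupp.single i 1 - Finsupp.single i 1 = m := by
        ext j
        rw [Finsupp.tsub_apply, Finsupp.add_apply]
        omega
      have h2 : (m + Finsupp.single i 1 : σ →₀ ℕ) i = m i + 1 := by
        rw [Finsupp.add_apply, Finsupp.single_eq_same]
      rw [if_pos h1, h2]
      simp only [if_pos rfl]
      push_cast
      ring
    · rw [if_neg hs]
      by_cases h2 : s - Finsupp.single i 1 = m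
      · rw [if_pos h2]
        have hsi : s i = 0 := by
          by_contra h0
          apply hs
          have hle : Finsupp.single i 1 ≤ s := by
            rw [Finsupp.single_le_iff]
            omega
          rw [← h2, tsub_add_cancel_of_le hle]
        simp [hsi]
      · rw [if_neg h2]; ring

private lemma pderiv_comm' {σ : Type*} [DecidableEq σ] (q r : σ) (p : MvPolynomial σ ℂ) :
    pderiv q (pderiv r p) = pderiv r (pderiv q p) := by
  by_cases hqr : q = r
  · rw [hqr]
  · ext m
    rw [coeff_pderiv', coeff_pderiv', coeff_pderiv', coeff_pderiv']
    have h1 : (m + Finsupp.single q 1 : σ →₀ ℕ) r = m r := by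
      rw [Finsupp.add_apply, Finsupp.single_apply, if_neg hqr, add_zero]
    have h2 : (m + Finsupp.single r 1 : σ →₀ ℕ) q = m q := by
      rw [Finsupp.add_apply, Finsupp.single_apply, if_neg (Ne.symm hqr), add_zero]
    rw [h1, h2, add_right_comm]
    ring

private lemma pderiv_isHomogeneous {σ : Type*} [DecidableEq σ] {p : MvPolynomial σ ℂ} {n : ℕ}
    (hp : p.IsHomogeneous (n + 1)) (i : σ) : (pderiv i p).IsHomogeneous n := by
  intro m hm
  rw [coeff_pderiv'] at hm
  have h1 : coeff (m + Finsupp.single i 1) p ≠ 0 := by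
    intro h0; rw [h0, mul_zero] at hm; exact hm rfl
  have hd := hp h1
  rw [map_add] at hd
  have hs : (Finsupp.weight (1 : σ → ℕ)) (Finsupp.single i 1) = 1 := by
    simp [Finsupp.weight_apply, Finsupp.sum_single_index]
  rw [hs] at hd
  show (Finsupp.weight (1 : σ → ℕ)) m = n
  omega

private lemma eq_zero_of_pderiv_eq_zero {σ : Type*} [DecidableEq σ]
    {p : MvPolynomial σ ℂ} {n : ℕ} (hp : p.IsHomogeneous (n + 1))
    (h : ∀ i, pderiv i p = 0) : p = 0 := by
  ext m
  rw [coeff_zero]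
  by_contra h0
  have hd : (Finsupp.weight (1 : σ → ℕ)) m = n + 1 := hp h0
  have hm0 : m ≠ 0 := by
    intro hm; rw [hm, map_zero] at hd; omega
  obtain ⟨i, hi⟩ : ∃ i, m i ≠ 0 := by
    by_contra hall
    push_neg at hall
    exact hm0 (Finsupp.ext fun j => hall j)
  have hle : Finsupp.single i 1 ≤ m := by rw [Finsupp.single_le_iff]; omega
  have key := coeff_pderiv' i (m - Finsupp.single i 1) p
  rw [h i, coeff_zero, tsub_add_cancel_of_le hle] at key
  have hmi : (((m - Finsupp.single i 1 : σ →₀ ℕ) i : ℕ) : ℂ) + 1 = (m i : ℂ) := by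
    rw [Finsupp.tsub_apply, Finsupp.single_eq_same]
    have : (m i - 1 : ℕ) + 1 = m i := by omega
    exact_mod_cast congrArg (Nat.cast (R := ℂ)) this
  rw [hmi] at key
  have hne : (m i : ℂ) ≠ 0 := by exact_mod_cast hi
  rcases mul_eq_zero.mp key.symm with hc | hc
  · exact hne hc
  · exact h0 hc

/-- the map `δ₁ : V ⊗ Sym³V → Sym²V ⊗ Sym²V`,
`A ⊗ B ↦ Σᵢ (A·xᵢ) ⊗ ∂B/∂xᵢ`, is injective.  A general element of `V ⊗ Sym³V` is
`Σ_k x_k ⊗ B k` with `B k ∈ Sym³V`; its image vanishes iff for every degree-2 monomial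
`x_p x_q` the coefficient `∂B_p/∂x_q + ∂B_q/∂x_p` (resp. `∂B_p/∂x_p` when `p = q`)
vanishes.  Injectivity says this forces all `B k = 0`. -/
theorem delta1_injective (B : Fin 4 → MvPolynomial (Fin 4) ℂ)
    (hB : ∀ k, (B k).IsHomogeneous 3)
    (h : ∀ p q : Fin 4, pderiv q (B p) + pderiv p (B q) = 0) :
    ∀ k, B k = 0 := by
  -- antisymmetry of first derivatives
  have anti : ∀ p q, pderiv q (B p) = -pderiv p (B q) := by
    intro p q
    linear_combination h p q
  -- all second derivatives vanish
  have D2 : ∀ p q r : Fin 4, pderiv q (pderiv r (B p)) = 0 := by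
    intro p q r
    have e1 : pderiv q (pderiv r (B p)) = -pderiv q (pderiv p (B r)) := by
      rw [anti p r]; simp
    have e2 : pderiv q (pderiv p (B r)) = pderiv p (pderiv q (B r)) := pderiv_comm' q p _
    have e3 : pderiv p (pderiv q (B r)) = -pderiv p (pderiv r (B q)) := by
      rw [anti r q]; simp
    have e4 : pderiv p (pderiv r (B q)) = pderiv r (pderiv p (B q)) := pderiv_comm' p r _
    have e5 : pderiv r (pderiv p (B q)) = -pderiv r (pderiv q (B p)) := by
      rw [anti q p]; simp
    have e6 : pderiv r (pderiv q (B p)) = pderiv q (pderiv r (B p)) := pderiv_comm' r q _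
    have htwo : (2 : ℂ) • pderiv q (pderiv r (B p)) = 0 := by
      rw [two_smul]
      linear_combination e1 - e2 - e3 + e4 + e5 - e6
    rcases smul_eq_zero.mp htwo with hc | hc
    · norm_num at hc
    · exact hc
  intro k
  have first : ∀ q, pderiv q (B k) = 0 := fun q =>
    eq_zero_of_pderiv_eq_zero (n := 1) (pderiv_isHomogeneous (n := 2) (hB k) q)
      (fun r => D2 k r q)
  exact eq_zero_of_pderiv_eq_zero (n := 2) (hB k) first
end
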